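/- Let A, B be nonempty subsets of a metric space X, and let f : X → ℝ be 1-Lipschitz. Denote by E_A(f) the Whitney–McShane extension of f|_A to X, and E_B(f) that of f|_B. Then sup_{x ∈ X} |E_A(f)(x) − E_B(f)(x)| ≤ 2 d_H(A, B), where d_H is the Hausdorff distance in X. -/

import Mathlib

lemma stmt_8_aux {X : Type*} [MetricSpace X] (A B : Set X)
    (hA : A.Nonempty) (hB : B.Nonempty)
    (hfin : EMetric.hausdorffEdist A B ≠ ⊤)
    (f : X → ℝ) (hf : ∀ x y : X, |f x - f y| ≤ dist x y) (x : X) :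
    sInf ((fun b => f b + dist b x) '' B)
      ≤ sInf ((fun a => f a + dist a x) '' A) + 2 * Metric.hausdorffDist A B := by
  have hbdd : BddBelow ((fun b => f b + dist b x) '' B) := by
    refine ⟨f x, ?_⟩
    rintro _ ⟨b, hb, rfl⟩
    have h := (abs_le.1 (hf x b)).2
    rw [dist_comm x b] at h
    show f x ≤ f b + dist b x
    linarith
  rw [← sub_le_iff_le_add]
  refine le_csInf (hA.image _) ?_
  rintro _ ⟨a, ha, rfl⟩
  rw [sub_le_iff_le_add]
  -- show sInf_B ≤ f a + dist a x + 2 * H, via ε-argument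
  refine le_of_forall_pos_le_add fun ε hε => ?_
  have hH : Metric.hausdorffDist A B < Metric.hausdorffDist A B + ε / 2 := by linarith
  obtain ⟨b, hb, hab⟩ := Metric.exists_dist_lt_of_hausdorffDist_lt ha hH hfin
  calc sInf ((fun b => f b + dist b x) '' B) ≤ f b + dist b x :=
        csInf_le hbdd ⟨b, hb, rfl⟩
    _ ≤ f a + dist a b + (dist b a + dist a x) := by
        have h1 := (abs_le.1 (hf b a)).2
        have h2 := dist_triangle b a x
        have h3 : dist a b = dist b a := dist_comm a b
        linarith
    _ ≤ f a + dist a x + 2 * Metric.hausdorffDist A B + ε := by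
        rw [dist_comm b a]; linarith

theorem stmt_8 {X : Type*} [MetricSpace X] (A B : Set X)
    (hA : A.Nonempty) (hB : B.Nonempty)
    (hfin : EMetric.hausdorffEdist A B ≠ ⊤)
    (f : X → ℝ) (hf : ∀ x y : X, |f x - f y| ≤ dist x y) :
    ∀ x : X, |sInf ((fun a => f a + dist a x) '' A)
        - sInf ((fun b => f b + dist b x) '' B)|
      ≤ 2 * Metric.hausdorffDist A B := by
  intro x
  rw [abs_sub_le_iff]
  constructor
  · have := stmt_8_aux B A hB hA (by show Metric.hausdorffEDist B A ≠ ⊤; rw [Metric.hausdorffEDist_comm]; exact hfin) f hf x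
    rw [Metric.hausdorffDist_comm] at this
    linarith
  · have := stmt_8_aux A B hA hB hfin f hf x
    linarith
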